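/- Consider the PROP1 reduction instance: given nonnegative numbers a_1,...,a_m summing to 2S (S>0, each a_i ≤ S), three agents, m number-items and 4 extra-items e_1,...,e_4; Alice values number-items at 0 and each e_i at 3S/2; Bob and Carl value number-item i at a_i and each e_j at S. Then there exists an allocation that is both utilitarian-maximal and PROP1 if and only if the numbers can be partitioned into two sets each summing to S. -/

import Mathlib

open Finset

variable {m : ℕ}

/-- Utilities of the three agents (0 = Alice, 1 = Bob, 2 = Carl) over the `m` number-items
(`Sum.inl j`) and the 4 extra-items (`Sum.inr e`): Alice values number-items at 0 and each
extra-item at `3S/2`; Bob and Carl value number-item `j` at `a j` and each extra-item at `S`. -/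
noncomputable def u9 (S : ℝ) (a : Fin m → ℝ) : Fin 3 → (Fin m ⊕ Fin 4) → ℝ :=
  fun i o => match o with
  | Sum.inl j => if i = 0 then 0 else a j
  | Sum.inr _ => if i = 0 then 3 * S / 2 else S

/-- The bundle of agent `i` under allocation `p`. -/
def bundle9 (p : (Fin m ⊕ Fin 4) → Fin 3) (i : Fin 3) : Finset (Fin m ⊕ Fin 4) :=
  Finset.univ.filter (fun o => p o = i)

/-- Utilitarian welfare of an allocation. -/
noncomputable def welf9 (S : ℝ) (a : Fin m → ℝ) (p : (Fin m ⊕ Fin 4) → Fin 3) : ℝ :=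
  ∑ o, u9 S a (p o) o

/-- PROP1: each agent gets their proportional share `uᵢ(O)/3`, possibly after adding the
value of one item not allocated to them, or after removing one item from their bundle. -/
def PROP1_9 (S : ℝ) (a : Fin m → ℝ) (p : (Fin m ⊕ Fin 4) → Fin 3) : Prop :=
  ∀ i : Fin 3,
    (∑ o, u9 S a i o) / 3 ≤ ∑ o ∈ bundle9 p i, u9 S a i o ∨
    (∃ o ∉ bundle9 p i, (∑ o, u9 S a i o) / 3 ≤ (∑ o ∈ bundle9 p i, u9 S a i o) + u9 S a i o) ∨
    (∃ o ∈ bundle9 p i, (∑ o, u9 S a i o) / 3 ≤ (∑ o ∈ bundle9 p i, u9 S a i o) - u9 S a i o)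

lemma fin3cases : ∀ x : Fin 3, x = 0 ∨ x = 1 ∨ x = 2 := by decide

lemma u9_total (S : ℝ) (a : Fin m → ℝ) (hsum : ∑ j, a j = 2 * S) (i : Fin 3) :
    ∑ o, u9 S a i o = 6 * S := by
  rw [Fintype.sum_sum_type]
  by_cases h : i = 0 <;> simp [u9, h, hsum, Finset.sum_const] <;> ring

lemma welf9_split (S : ℝ) (a : Fin m → ℝ) (p : (Fin m ⊕ Fin 4) → Fin 3) :
    welf9 S a p = (∑ j, if p (Sum.inl j) = 0 then (0:ℝ) else a j)
      + ∑ e : Fin 4, (if p (Sum.inr e) = 0 then 3 * S / 2 else S) := by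
  unfold welf9
  rw [Fintype.sum_sum_type]
  rfl

lemma bundle9_sum (S : ℝ) (a : Fin m → ℝ) (p : (Fin m ⊕ Fin 4) → Fin 3) (i : Fin 3) :
    ∑ o ∈ bundle9 p i, u9 S a i o
      = (∑ j, if p (Sum.inl j) = i then u9 S a i (Sum.inl j) else 0)
        + ∑ e : Fin 4, (if p (Sum.inr e) = i then u9 S a i (Sum.inr e) else 0) := by
  rw [bundle9, Finset.sum_filter, Fintype.sum_sum_type]

/-- There is an allocation that is both utilitarian-maximal and PROP1 iff the numbers
`a₁,…,a_m` (summing to `2S`) can be partitioned into two sets each summing to `S`. -/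
theorem stmt9 (S : ℝ) (hS : 0 < S) (a : Fin m → ℝ)
    (ha0 : ∀ j, 0 ≤ a j) (haS : ∀ j, a j ≤ S) (hsum : ∑ j, a j = 2 * S) :
    (∃ p : (Fin m ⊕ Fin 4) → Fin 3,
        (∀ q : (Fin m ⊕ Fin 4) → Fin 3, welf9 S a q ≤ welf9 S a p) ∧ PROP1_9 S a p) ↔
      ∃ T : Finset (Fin m), ∑ j ∈ T, a j = S := by
  have hub : ∀ q : (Fin m ⊕ Fin 4) → Fin 3, welf9 S a q ≤ 8 * S := by
    intro q
    rw [welf9_split]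
    have h1 : (∑ j, if q (Sum.inl j) = 0 then (0:ℝ) else a j) ≤ ∑ j, a j :=
      Finset.sum_le_sum (fun j _ => by split_ifs with h; exacts [ha0 j, le_refl _])
    have h2 : (∑ e : Fin 4, if q (Sum.inr e) = 0 then 3*S/2 else S)
        ≤ ∑ _e : Fin 4, 3*S/2 :=
      Finset.sum_le_sum (fun e _ => by split_ifs with h; exacts [le_refl _, by linarith])
    have h3 : (∑ _e : Fin 4, 3*S/2 : ℝ) = 6*S := by
      simp [Finset.sum_const]; ring
    rw [hsum] at h1
    linarith
  constructor
  · rintro ⟨p, hmax, hprop⟩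
    -- welfare of p is exactly 8S
    have hq : welf9 S a (Sum.elim (fun _ => (1:Fin 3)) (fun _ => 0)) = 8 * S := by
      rw [welf9_split]
      simp [hsum]
      ring
    have heq : welf9 S a p = 8 * S :=
      le_antisymm (hub p) (hq ▸ hmax _)
    rw [welf9_split] at heq
    have hA : (∑ j, if p (Sum.inl j) = 0 then (0:ℝ) else a j) ≤ 2 * S := by
      have h1 : (∑ j, if p (Sum.inl j) = 0 then (0:ℝ) else a j) ≤ ∑ j, a j :=
        Finset.sum_le_sum (fun j _ => by split_ifs with h; exacts [ha0 j, le_refl _])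
      rw [hsum] at h1; exact h1
    have hB : (∑ e : Fin 4, if p (Sum.inr e) = 0 then 3*S/2 else S) ≤ 6 * S := by
      have h2 : (∑ e : Fin 4, if p (Sum.inr e) = 0 then 3*S/2 else S)
          ≤ ∑ _e : Fin 4, 3*S/2 :=
        Finset.sum_le_sum (fun e _ => by split_ifs with h; exacts [le_refl _, by linarith])
      have h3 : (∑ _e : Fin 4, 3*S/2 : ℝ) = 6*S := by
        simp [Finset.sum_const]; ring
      linarith
    have hAeq : (∑ j, if p (Sum.inl j) = 0 then (0:ℝ) else a j) = 2 * S := by linarith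
    have hBeq : (∑ e : Fin 4, if p (Sum.inr e) = 0 then 3*S/2 else S) = 6 * S := by linarith
    -- all extra items go to Alice
    have hext : ∀ e : Fin 4, p (Sum.inr e) = 0 := by
      intro e
      by_contra hne
      have h3 : (∑ _e : Fin 4, 3*S/2 : ℝ) = 6*S := by
        simp [Finset.sum_const]; ring
      have := (Finset.sum_eq_sum_iff_of_le
        (f := fun e : Fin 4 => if p (Sum.inr e) = 0 then 3*S/2 else S)
        (g := fun _ : Fin 4 => 3*S/2)
        (fun e _ => by split_ifs with h; exacts [le_refl _, by linarith])).mp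
        (by rw [hBeq, h3]) e (Finset.mem_univ e)
      simp [hne] at this
      linarith
    -- bundle values of Bob and Carl
    set t1 := ∑ j, (if p (Sum.inl j) = 1 then a j else 0) with ht1
    set t2 := ∑ j, (if p (Sum.inl j) = 2 then a j else 0) with ht2
    have hb1 : ∑ o ∈ bundle9 p 1, u9 S a 1 o = t1 := by
      rw [bundle9_sum, ht1]
      have : (∑ e : Fin 4, (if p (Sum.inr e) = 1 then u9 S a 1 (Sum.inr e) else 0)) = 0 := by
        apply Finset.sum_eq_zero
        intro e _
        simp [hext e]
      rw [this, add_zero]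
      exact Finset.sum_congr rfl (fun j _ => by split_ifs <;> simp [u9])
    have hb2 : ∑ o ∈ bundle9 p 2, u9 S a 2 o = t2 := by
      rw [bundle9_sum, ht2]
      have : (∑ e : Fin 4, (if p (Sum.inr e) = 2 then u9 S a 2 (Sum.inr e) else 0)) = 0 := by
        apply Finset.sum_eq_zero
        intro e _
        simp [hext e]
      rw [this, add_zero]
      exact Finset.sum_congr rfl (fun j _ => by split_ifs <;> simp [u9])
    have hsum12 : t1 + t2 = 2 * S := by
      rw [ht1, ht2, ← Finset.sum_add_distrib, ← hAeq]
      refine Finset.sum_congr rfl (fun j _ => ?_)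
      rcases fin3cases (p (Sum.inl j)) with h | h | h <;> simp [h]
    have hulb : ∀ i o, 0 ≤ u9 S a i o := by
      intro i o
      cases o <;> simp [u9] <;> split_ifs <;> first | linarith | exact ha0 _
    have huub1 : ∀ o, u9 S a 1 o ≤ S := by
      intro o
      cases o <;> simp [u9]
      exact haS _
    have huub2 : ∀ o, u9 S a 2 o ≤ S := by
      intro o
      cases o <;> simp [u9]
      exact haS _
    have key : ∀ i : Fin 3, ∀ t : ℝ, (∑ o ∈ bundle9 p i, u9 S a i o = t) →
        (∀ o, u9 S a i o ≤ S) → S ≤ t := by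
      intro i t ht hub'
      have htot := u9_total S a hsum i
      rcases hprop i with h | ⟨o, _, h⟩ | ⟨o, _, h⟩
      · rw [htot, ht] at h; linarith
      · rw [htot, ht] at h
        have := hub' o
        linarith
      · rw [htot, ht] at h
        have := hulb i o
        linarith
    have h1S : S ≤ t1 := key 1 t1 hb1 huub1
    have h2S : S ≤ t2 := key 2 t2 hb2 huub2
    refine ⟨Finset.univ.filter (fun j => p (Sum.inl j) = 1), ?_⟩
    rw [Finset.sum_filter]
    linarith
  · rintro ⟨T, hT⟩
    refine ⟨fun o => match o with
      | Sum.inl j => if j ∈ T then 1 else 2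
      | Sum.inr _ => 0, ?_, ?_⟩
    · intro q
      refine le_trans (hub q) (le_of_eq ?_)
      rw [welf9_split]
      have h1 : (∑ j, if (if j ∈ T then (1:Fin 3) else 2) = 0 then (0:ℝ) else a j)
          = ∑ j, a j :=
        Finset.sum_congr rfl (fun j _ => by split_ifs <;> simp_all)
      rw [h1, hsum]
      simp [Finset.sum_const]
      ring
    · have hcompl : (∑ j, if j ∈ T then (0:ℝ) else a j) = S := by
        have hsplit : (∑ j, if j ∈ T then a j else 0) + (∑ j, if j ∈ T then (0:ℝ) else a j)
            = ∑ j, a j := by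
          rw [← Finset.sum_add_distrib]
          exact Finset.sum_congr rfl (fun j _ => by split_ifs <;> ring)
        have hTin : (∑ j, if j ∈ T then a j else 0) = S := by
          rw [Finset.sum_ite_mem, Finset.univ_inter, hT]
        rw [hTin, hsum] at hsplit
        linarith
      intro i
      have htot := u9_total S a hsum i
      rcases fin3cases i with hi | hi | hi
      · left
        rw [htot, hi, bundle9_sum]
        have h1 : (∑ j, if (if j ∈ T then (1:Fin 3) else 2) = 0
            then u9 S a 0 (Sum.inl j) else 0) = 0 :=
          Finset.sum_eq_zero (fun j _ => by split_ifs <;> simp_all)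
        have h2 : (∑ e : Fin 4, if (0:Fin 3) = 0 then u9 S a 0 (Sum.inr e) else 0)
            = 6 * S := by
          simp [u9, Finset.sum_const]
          ring
        rw [h1, h2]
        linarith
      · right; left
        refine ⟨Sum.inr 0, ?_, ?_⟩
        · simp [bundle9, hi]
        · rw [htot, hi, bundle9_sum]
          have h1 : (∑ j, if (if j ∈ T then (1:Fin 3) else 2) = 1
              then u9 S a 1 (Sum.inl j) else 0) = S := by
            rw [← hT, ← Finset.univ_inter T, ← Finset.sum_ite_mem]
            exact Finset.sum_congr rfl (fun j _ => by split_ifs <;> simp_all [u9])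
          have h2 : (∑ e : Fin 4, if (0:Fin 3) = 1 then u9 S a 1 (Sum.inr e) else 0)
              = 0 := by simp
          rw [h1, h2]
          have : u9 S a 1 (Sum.inr 0) = S := by simp [u9]
          rw [this]
          linarith
      · right; left
        refine ⟨Sum.inr 0, ?_, ?_⟩
        · simp [bundle9, hi]
        · rw [htot, hi, bundle9_sum]
          have h1 : (∑ j, if (if j ∈ T then (1:Fin 3) else 2) = 2
              then u9 S a 2 (Sum.inl j) else 0) = S := by
            rw [← hcompl]
            exact Finset.sum_congr rfl (fun j _ => by split_ifs <;> simp_all [u9])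
          have h2 : (∑ e : Fin 4, if (0:Fin 3) = 2 then u9 S a 2 (Sum.inr e) else 0)
              = 0 := by simp
          rw [h1, h2]
          have : u9 S a 2 (Sum.inr 0) = S := by simp [u9]
          rw [this]
          linarith
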